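/- Let J be a real 4×4 matrix satisfying Jᵀ J = I and J² = −I, and let H be a real symmetric positive semidefinite 4×4 matrix. Define the J-invariant part H^J = (1/2)(H + Jᵀ H J). Then H^J is symmetric positive semidefinite and det H ≤ 8 · det(H^J). -/

import Mathlib

open Matrix

private lemma psd_det_nonneg {n : Type*} [Fintype n] [DecidableEq n]
    {M : Matrix n n ℝ} (hM : M.PosSemidef) : 0 ≤ M.det := by
  rw [hM.1.det_eq_prod_eigenvalues]
  exact Finset.prod_nonneg fun i _ => by simpa using hM.eigenvalues_nonneg i

private lemma psd_smul_half {n : Type*} [Fintype n]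
    {M : Matrix n n ℝ} (hM : M.PosSemidef) : ((1 / 2 : ℝ) • M).PosSemidef := by
  have hherm : ((1 / 2 : ℝ) • M).IsHermitian := by
    show _ = _
    rw [conjTranspose_smul, hM.1.eq]
    simp
  refine PosSemidef.of_dotProduct_mulVec_nonneg hherm fun x => ?_
  have := hM.dotProduct_mulVec_nonneg x
  simp only [Matrix.smul_mulVec, dotProduct_smul, smul_eq_mul]
  positivity

private lemma det_one_add_psd {C : Matrix (Fin 4) (Fin 4) ℝ} (hC : C.PosSemidef) :
    1 + C.det ≤ (1 + C).det := by
  have h1 : (1 + C).IsHermitian := by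
    simpa using (Matrix.isHermitian_one (n := Fin 4) (α := ℝ)).add hC.1
  have hspec := hC.1.spectral_theorem
  set U : Matrix (Fin 4) (Fin 4) ℝ := (hC.1.eigenvectorUnitary : Matrix (Fin 4) (Fin 4) ℝ)
    with hUdef
  set D : Matrix (Fin 4) (Fin 4) ℝ := diagonal (RCLike.ofReal ∘ hC.1.eigenvalues) with hDdef
  have hU : U * star U = 1 := Matrix.mem_unitaryGroup_iff.mp hC.1.eigenvectorUnitary.2
  have hone : (1 : Matrix (Fin 4) (Fin 4) ℝ) + C = U * (1 + D) * star U := by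
    rw [mul_add, add_mul, mul_one, hU]
    exact congrArg (1 + ·) hspec
  have hdetU : U.det * (star U).det = 1 := by
    rw [← det_mul, hU, det_one]
  have hdet : (1 + C).det = (1 + D).det := by
    rw [hone, det_mul, det_mul]
    linear_combination (1 + D).det * hdetU
  have hdiag : (1 : Matrix (Fin 4) (Fin 4) ℝ) + D
      = diagonal (fun i => 1 + hC.1.eigenvalues i) := by
    rw [hDdef, ← diagonal_one, diagonal_add]
    rfl
  rw [hdet, hdiag, det_diagonal, hC.1.det_eq_prod_eigenvalues]
  have hnn := hC.eigenvalues_nonneg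
  simp only [RCLike.ofReal_real_eq_id, id] at hnn ⊢
  set a := hC.1.eigenvalues 0
  set b := hC.1.eigenvalues 1
  set c := hC.1.eigenvalues 2
  set d := hC.1.eigenvalues 3
  have ha : 0 ≤ a := hnn 0
  have hb : 0 ≤ b := hnn 1
  have hc : 0 ≤ c := hnn 2
  have hd : 0 ≤ d := hnn 3
  rw [Fin.prod_univ_four, Fin.prod_univ_four]
  nlinarith [mul_nonneg ha hb, mul_nonneg hc hd, mul_nonneg ha hc, mul_nonneg hb hd,
    mul_nonneg ha hd, mul_nonneg hb hc, mul_nonneg (mul_nonneg ha hb) hc,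
    mul_nonneg (mul_nonneg ha hb) hd, mul_nonneg (mul_nonneg ha hc) hd,
    mul_nonneg (mul_nonneg hb hc) hd]

open scoped MatrixOrder in
private lemma det_superadd {A B : Matrix (Fin 4) (Fin 4) ℝ}
    (hA : A.PosSemidef) (hB : B.PosSemidef) (hApd : 0 < A.det) :
    A.det + B.det ≤ (A + B).det := by
  set S := CFC.sqrt A with hSdef
  have hSS : S * S = A := CFC.sqrt_mul_sqrt_self A hA.nonneg
  have hSherm : Sᴴ = S := (CFC.sqrt_nonneg A).posSemidef.1
  have hdetS : S.det * S.det = A.det := by rw [← det_mul, hSS]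
  have hS0 : S.det ≠ 0 := by
    intro h; rw [h, mul_zero] at hdetS; exact hApd.ne (hdetS)
  have hSinv : S * S⁻¹ = 1 := mul_nonsing_inv S (by simpa using hS0)
  have hSinv' : S⁻¹ * S = 1 := nonsing_inv_mul S (by simpa using hS0)
  set C := S⁻¹ * B * S⁻¹ with hCdef
  have hC : C.PosSemidef := by
    have := hB.conjTranspose_mul_mul_same S⁻¹
    rwa [conjTranspose_nonsing_inv, hSherm] at this
  have hkey : A + B = S * (1 + C) * S := by
    rw [mul_add, add_mul, mul_one, hSS, hCdef]
    congr 1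
    rw [show S * (S⁻¹ * B * S⁻¹) * S = (S * S⁻¹) * B * (S⁻¹ * S) by noncomm_ring,
      hSinv, hSinv', one_mul, mul_one]
  have hdetC : A.det * C.det = B.det := by
    have hdi : S⁻¹.det = S.det⁻¹ :=
      eq_inv_of_mul_eq_one_right (by rw [← det_mul, hSinv, det_one])
    rw [hCdef, det_mul, det_mul, hdi, ← hdetS]
    field_simp
  have := det_one_add_psd hC
  have hmul : A.det * (1 + C.det) ≤ A.det * (1 + C).det :=
    mul_le_mul_of_nonneg_left this hApd.le
  have h2 : (S * (1 + C) * S).det = A.det * (1 + C).det := by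
    rw [det_mul, det_mul]
    linear_combination (1 + C).det * hdetS
  rw [hkey, h2]
  nlinarith [hmul, hdetC]

private lemma det_superadd' {A B : Matrix (Fin 4) (Fin 4) ℝ}
    (hA : A.PosSemidef) (hB : B.PosSemidef) :
    A.det + B.det ≤ (A + B).det := by
  rcases lt_or_eq_of_le (psd_det_nonneg hA) with hApd | hA0
  · exact det_superadd hA hB hApd
  rcases lt_or_eq_of_le (psd_det_nonneg hB) with hBpd | hB0
  · rw [add_comm A.det, add_comm A B]; exact det_superadd hB hA hBpd
  · rw [← hA0, ← hB0, add_zero]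
    exact psd_det_nonneg (hA.add hB)

/-- The linear-algebra lemma used in the proof of Theorem 1.2: if `J` is an orthogonal almost
complex structure (`Jᵀ J = I`, `J² = −I`) on `ℝ⁴` and `H` is symmetric positive semidefinite,
then the `J`-invariant part `H^J = (H + Jᵀ H J)/2` is positive semidefinite and
`det H ≤ 8 det H^J`. -/
theorem det_le_J_invariant_part
    (J H : Matrix (Fin 4) (Fin 4) ℝ)
    (hJorth : Jᵀ * J = 1) (hJsq : J * J = -1)
    (hH : H.PosSemidef) :
    ((1 / 2 : ℝ) • (H + Jᵀ * H * J)).PosSemidef ∧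
      H.det ≤ 8 * ((1 / 2 : ℝ) • (H + Jᵀ * H * J)).det := by
  have hJT : Jᴴ = Jᵀ := by
    ext i j; simp [conjTranspose_apply]
  have hB : (Jᵀ * H * J).PosSemidef := by
    have := hH.conjTranspose_mul_mul_same J
    rwa [hJT] at this
  have hdetJ : J.det * J.det = 1 := by
    have := congrArg det hJorth
    rwa [det_mul, det_transpose, det_one] at this
  have hdetB : (Jᵀ * H * J).det = H.det := by
    rw [det_mul, det_mul, det_transpose]
    linear_combination H.det * hdetJ
  refine ⟨psd_smul_half (hH.add hB), ?_⟩
  have hsup := det_superadd' hH hB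
  rw [hdetB] at hsup
  rw [det_smul]
  simp only [Fintype.card_fin]
  nlinarith [hsup]
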